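/- Let k ≥ 1 and let γ be a rectangular loop in the plane spanned by two coordinate directions of ℤ^m, and let j ≥ 1 with k ∤ j. If n is a current in the class C_{jγ,k} (i.e., (n[∂̂e] − n[−∂̂e]) + k(n[e] − n[−e]) + jγ[e] = 0 for all edges e), then the restriction of supp n to plaquettes contains at least area(γ) plaquettes, where area(γ) is the number of plaquettes in the minimal spanning surface of γ. -/
import Mathlib


open scoped Classical

/-- A positively oriented edge of `ℤ^m`: a base point and a direction. -/
abbrev ZEdge (m : ℕ) := (Fin m → ℤ) × Fin m

/-- A positively oriented plaquette of `ℤ^m`: a base point and an ordered pair of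
directions. -/
abbrev ZPlaq (m : ℕ) := (Fin m → ℤ) × Fin m × Fin m

/-- The unit vector in direction `i`. -/
def zunit {m : ℕ} (i : Fin m) : Fin m → ℤ := fun l => if l = i then 1 else 0

/-- The coefficient of the positive edge `e` in the boundary of the plaquette
`p = (x, i, j)`, whose boundary is `+(x,i) +(x+eᵢ,j) −(x+eⱼ,i) −(x,j)`. -/
noncomputable def bdCoef {m : ℕ} (p : ZPlaq m) (e : ZEdge m) : ℤ :=
  (if e = (p.1, p.2.1) then 1 else 0)
  + (if e = (fun l => p.1 l + zunit p.2.1 l, p.2.2) then 1 else 0)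
  - (if e = (fun l => p.1 l + zunit p.2.2 l, p.2.1) then 1 else 0)
  - (if e = (p.1, p.2.2) then 1 else 0)

/-- The rectangular loop with side lengths `R` (in direction `d0`) and `T` (in direction
`d1`), based at the origin of the coordinate plane spanned by `d0, d1`. -/
noncomputable def rectLoop {m : ℕ} (d0 d1 : Fin m) (R T : ℕ) (e : ZEdge m) : ℤ :=
  if (∀ l : Fin m, l ≠ d0 → l ≠ d1 → e.1 l = 0) then
    (if e.2 = d0 ∧ e.1 d1 = 0 ∧ 0 ≤ e.1 d0 ∧ e.1 d0 < R then 1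
     else if e.2 = d1 ∧ e.1 d0 = R ∧ 0 ≤ e.1 d1 ∧ e.1 d1 < T then 1
     else if e.2 = d0 ∧ e.1 d1 = T ∧ 0 ≤ e.1 d0 ∧ e.1 d0 < R then -1
     else if e.2 = d1 ∧ e.1 d0 = 0 ∧ 0 ≤ e.1 d1 ∧ e.1 d1 < T then -1
     else 0)
  else 0

-- key lemma: one witness plaquette per square
private lemma keylem (m : ℕ) (d0 d1 : Fin m) (hd : d0 ≠ d1)
    (R T : ℕ) (k j : ℤ) (hndvd : ¬ k ∣ j)
    (nE : ZEdge m × Bool → ℕ) (nP : ZPlaq m × Bool → ℕ)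
    (hfin : {p : ZPlaq m | nP (p, true) ≠ 0 ∨ nP (p, false) ≠ 0}.Finite)
    (hcurrent : ∀ e : ZEdge m,
      (∑ᶠ p : ZPlaq m, bdCoef p e * ((nP (p, true) : ℤ) - (nP (p, false) : ℤ)))
        + k * ((nE (e, true) : ℤ) - (nE (e, false) : ℤ))
        + j * rectLoop d0 d1 R T e = 0)
    (a b : ℤ) (ha : 0 ≤ a) (haR : a < R) (hb : 0 ≤ b) (hbT : b < T) :
    ∃ p ∈ hfin.toFinset, p.1 d0 = a ∧ p.1 d1 = b := by
  classical
  set F : ZPlaq m → ℤ := fun p => (nP (p, true) : ℤ) - (nP (p, false) : ℤ) with hFdef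
  -- the half-plane predicate
  set EH : ZEdge m → Prop := fun e => e.2 = d0 ∧ e.1 d0 = a ∧ b + 1 ≤ e.1 d1 with hEHdef
  -- the distinguished loop edge
  set x₀ : Fin m → ℤ := fun l => if l = d0 then a else if l = d1 then (T : ℤ) else 0 with hx0def
  set γe : ZEdge m := (x₀, d0) with hγedef
  have hx0d0 : x₀ d0 = a := by simp [hx0def]
  have hx0d1 : x₀ d1 = (T : ℤ) := by simp [hx0def, Ne.symm hd]
  have hEHγe : EH γe := by
    refine ⟨rfl, ?_, ?_⟩
    · show x₀ d0 = a; exact hx0d0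
    · show b + 1 ≤ x₀ d1; rw [hx0d1]; omega
  -- candidate boundary edges (in direction d0) of a plaquette
  set Cand : ZPlaq m → Finset (ZEdge m) := fun p =>
    {(p.1, d0), (fun l => p.1 l + zunit p.2.1 l, d0), (fun l => p.1 l + zunit p.2.2 l, d0)}
    with hCanddef
  set E' : Finset (ZEdge m) :=
    insert γe ((hfin.toFinset.biUnion Cand).filter EH) with hE'def
  have hγeE' : γe ∈ E' := Finset.mem_insert_self _ _
  have hE'EH : ∀ e ∈ E', EH e := by
    intro e he
    rcases Finset.mem_insert.1 he with h | h
    · rwa [h]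
    · exact (Finset.mem_filter.1 h).2
  have hCandE' : ∀ p ∈ hfin.toFinset, ∀ e ∈ Cand p, EH e → e ∈ E' := by
    intro p hp e he hEHe
    exact Finset.mem_insert_of_mem (Finset.mem_filter.2 ⟨Finset.mem_biUnion.2 ⟨p, hp, he⟩, hEHe⟩)
  -- finsum to finset sum
  have hsupp : ∀ p : ZPlaq m, F p ≠ 0 → p ∈ hfin.toFinset := by
    intro p hp
    rw [Set.Finite.mem_toFinset]
    by_contra h
    simp only [Set.mem_setOf_eq, not_or, not_not] at h
    apply hp
    simp [hFdef, h.1, h.2]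
  have hplaq : ∀ e : ZEdge m,
      (∑ᶠ p : ZPlaq m, bdCoef p e * F p) = ∑ p ∈ hfin.toFinset, bdCoef p e * F p := by
    intro e
    apply finsum_eq_sum_of_support_subset
    intro p hp
    simp only [Function.mem_support] at hp
    have : F p ≠ 0 := by
      intro h0; exact hp (by rw [h0, mul_zero])
    exact hsupp p this
  -- sum the constraints over E'
  have hsum : ∑ e ∈ E', ((∑ p ∈ hfin.toFinset, bdCoef p e * F p)
        + k * ((nE (e, true) : ℤ) - (nE (e, false) : ℤ))
        + j * rectLoop d0 d1 R T e) = 0 := by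
    apply Finset.sum_eq_zero
    intro e _
    rw [← hplaq e]
    exact hcurrent e
  -- the coefficient of a plaquette in the summed constraint
  set cp : ZPlaq m → ℤ := fun p =>
    (if EH (p.1, p.2.1) then (1:ℤ) else 0)
    + (if EH (fun l => p.1 l + zunit p.2.1 l, p.2.2) then 1 else 0)
    - (if EH (fun l => p.1 l + zunit p.2.2 l, p.2.1) then 1 else 0)
    - (if EH (p.1, p.2.2) then 1 else 0) with hcpdef
  have hcp : ∀ p ∈ hfin.toFinset, (∑ e ∈ E', bdCoef p e) = cp p := by
    intro p hp
    have hgen : ∀ c : ZEdge m, (c.2 = d0 → c ∈ Cand p) →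
        ((if c ∈ E' then (1:ℤ) else 0) = if EH c then 1 else 0) := by
      intro c hc
      by_cases h : EH c
      · rw [if_pos h, if_pos (hCandE' p hp c (hc h.1) h)]
      · rw [if_neg h]
        by_cases h2 : c ∈ E'
        · exact absurd (hE'EH c h2) h
        · rw [if_neg h2]
    simp only [bdCoef]
    rw [Finset.sum_sub_distrib, Finset.sum_sub_distrib, Finset.sum_add_distrib]
    rw [Finset.sum_ite_eq' E' (p.1, p.2.1) (fun _ => (1:ℤ)),
        Finset.sum_ite_eq' E' ((fun l => p.1 l + zunit p.2.1 l, p.2.2) : ZEdge m) (fun _ => (1:ℤ)),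
        Finset.sum_ite_eq' E' ((fun l => p.1 l + zunit p.2.2 l, p.2.1) : ZEdge m) (fun _ => (1:ℤ)),
        Finset.sum_ite_eq' E' (p.1, p.2.2) (fun _ => (1:ℤ))]
    rw [hgen (p.1, p.2.1) ?h1, hgen (fun l => p.1 l + zunit p.2.1 l, p.2.2) ?h2,
        hgen (fun l => p.1 l + zunit p.2.2 l, p.2.1) ?h3, hgen (p.1, p.2.2) ?h4]
    case h1 =>
      intro h
      simp only [hCanddef, Finset.mem_insert, Finset.mem_singleton]
      left
      simp only at h
      rw [h]
    case h2 =>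
      intro h
      simp only [hCanddef, Finset.mem_insert, Finset.mem_singleton]
      right; left
      simp only at h
      rw [h]
    case h3 =>
      intro h
      simp only [hCanddef, Finset.mem_insert, Finset.mem_singleton]
      right; right
      simp only at h
      rw [h]
    case h4 =>
      intro h
      simp only [hCanddef, Finset.mem_insert, Finset.mem_singleton]
      left
      simp only at h
      rw [h]
  -- swap the order of summation
  have hswap : ∑ e ∈ E', ∑ p ∈ hfin.toFinset, bdCoef p e * F p
      = ∑ p ∈ hfin.toFinset, cp p * F p := by
    rw [Finset.sum_comm]
    refine Finset.sum_congr rfl fun p hp => ?_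
    rw [← Finset.sum_mul, hcp p hp]
  -- the loop contributes exactly -1
  have hrectval : ∀ e ∈ E', rectLoop d0 d1 R T e = if e = γe then -1 else 0 := by
    intro e he
    obtain ⟨he2, hea, heb⟩ := hE'EH e he
    simp only [rectLoop]
    by_cases hz : ∀ l : Fin m, l ≠ d0 → l ≠ d1 → e.1 l = 0
    · rw [if_pos hz]
      have hc1 : ¬ (e.2 = d0 ∧ e.1 d1 = 0 ∧ 0 ≤ e.1 d0 ∧ e.1 d0 < (R:ℤ)) := by
        rintro ⟨-, h1, -⟩; omega
      have hc2 : ¬ (e.2 = d1 ∧ e.1 d0 = (R:ℤ) ∧ 0 ≤ e.1 d1 ∧ e.1 d1 < (T:ℤ)) := by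
        rintro ⟨h1, -⟩; exact hd (he2 ▸ h1)
      have hc4 : ¬ (e.2 = d1 ∧ e.1 d0 = 0 ∧ 0 ≤ e.1 d1 ∧ e.1 d1 < (T:ℤ)) := by
        rintro ⟨h1, -⟩; exact hd (he2 ▸ h1)
      rw [if_neg hc1, if_neg hc2]
      by_cases hTc : e.1 d1 = (T:ℤ)
      · rw [if_pos ⟨he2, hTc, by rw [hea]; exact ha, by rw [hea]; exact haR⟩]
        have : e = γe := by
          rcases e with ⟨y, dir⟩
          simp only at he2 hea heb hTc hz
          simp only [hγedef, Prod.mk.injEq]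
          refine ⟨?_, he2⟩
          funext l
          by_cases hl0 : l = d0
          · rw [hl0, hea, hx0d0]
          · by_cases hl1 : l = d1
            · rw [hl1, hTc, hx0d1]
            · rw [hz l hl0 hl1, hx0def]
              simp [hl0, hl1]
        rw [if_pos this]
      · have hc3 : ¬ (e.2 = d0 ∧ e.1 d1 = (T:ℤ) ∧ 0 ≤ e.1 d0 ∧ e.1 d0 < (R:ℤ)) := by
          rintro ⟨-, h1, -⟩; exact hTc h1
        rw [if_neg hc3, if_neg hc4]
        have : e ≠ γe := by
          intro h
          apply hTc
          rw [h]
          exact hx0d1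
        rw [if_neg this]
    · rw [if_neg hz]
      have : e ≠ γe := by
        intro h
        apply hz
        intro l hl0 hl1
        rw [h]
        show x₀ l = 0
        simp [hx0def, hl0, hl1]
      rw [if_neg this]
  have hrect : ∑ e ∈ E', rectLoop d0 d1 R T e = -1 := by
    rw [Finset.sum_congr rfl hrectval, Finset.sum_ite_eq' E' γe (fun _ => (-1:ℤ)),
        if_pos hγeE']
  -- assemble: the signed plaquette sum equals j - k * (edge contribution)
  set S : ℤ := ∑ e ∈ E', ((nE (e, true) : ℤ) - (nE (e, false) : ℤ)) with hSdef
  have hmain : ∑ p ∈ hfin.toFinset, cp p * F p = j - k * S := by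
    have h1 : ∑ e ∈ E', ((∑ p ∈ hfin.toFinset, bdCoef p e * F p)
          + k * ((nE (e, true) : ℤ) - (nE (e, false) : ℤ))
          + j * rectLoop d0 d1 R T e)
        = (∑ e ∈ E', ∑ p ∈ hfin.toFinset, bdCoef p e * F p)
          + k * S + j * (∑ e ∈ E', rectLoop d0 d1 R T e) := by
      rw [Finset.sum_add_distrib, Finset.sum_add_distrib, Finset.mul_sum, Finset.mul_sum]
    rw [h1, hswap, hrect] at hsum
    linarith
  -- the coefficient vanishes away from the square (a,b)
  have hzunit_nonneg : ∀ i l : Fin m, 0 ≤ zunit i l := by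
    intro i l; unfold zunit; split <;> omega
  have hcpvanish : ∀ p : ZPlaq m, ¬ (p.1 d0 = a ∧ p.1 d1 = b) → cp p = 0 := by
    rintro ⟨x, i, i'⟩ hne
    simp only [hcpdef]
    by_cases hi : i = d0 <;> by_cases hi' : i' = d0
    · subst hi; subst hi'; ring
    · rw [hi]
      have h2 : ¬ EH (fun l => x l + zunit d0 l, i') := fun h => hi' h.1
      have h4 : ¬ EH (x, i') := fun h => hi' h.1
      rw [if_neg h2, if_neg h4]
      have hz0 : zunit i' d0 = 0 := by
        unfold zunit
        rw [if_neg (fun h => hi' h.symm)]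
      have hiff : EH (x, d0) ↔ EH (fun l => x l + zunit i' l, d0) := by
        constructor
        · rintro ⟨-, hxa, hxb⟩
          have hxa' : x d0 = a := hxa
          have hxb' : b + 1 ≤ x d1 := hxb
          refine ⟨rfl, ?_, ?_⟩
          · show x d0 + zunit i' d0 = a
            rw [hz0]; omega
          · show b + 1 ≤ x d1 + zunit i' d1
            have := hzunit_nonneg i' d1
            omega
        · rintro ⟨-, hxa, hxb⟩
          have hxa' : x d0 = a := by
            have : x d0 + zunit i' d0 = a := hxa
            rw [hz0] at this; omega
          refine ⟨rfl, hxa', ?_⟩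
          show b + 1 ≤ x d1
          have hxb' : b + 1 ≤ x d1 + zunit i' d1 := hxb
          by_cases hi'1 : i' = d1
          · have hz1 : zunit i' d1 = 1 := by unfold zunit; rw [if_pos hi'1.symm]
            have hxbne : x d1 ≠ b := fun h => hne ⟨hxa', h⟩
            omega
          · have hz1 : zunit i' d1 = 0 := by
              unfold zunit
              rw [if_neg (fun h => hi'1 h.symm)]
            omega
      simp only [hiff]; ring
    · rw [hi']
      have h1 : ¬ EH (x, i) := fun h => hi h.1
      have h3 : ¬ EH (fun l => x l + zunit d0 l, i) := fun h => hi h.1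
      rw [if_neg h1, if_neg h3]
      have hz0 : zunit i d0 = 0 := by
        unfold zunit
        rw [if_neg (fun h => hi h.symm)]
      have hiff : EH (fun l => x l + zunit i l, d0) ↔ EH (x, d0) := by
        constructor
        · rintro ⟨-, hxa, hxb⟩
          have hxa' : x d0 = a := by
            have : x d0 + zunit i d0 = a := hxa
            rw [hz0] at this; omega
          refine ⟨rfl, hxa', ?_⟩
          show b + 1 ≤ x d1
          have hxb' : b + 1 ≤ x d1 + zunit i d1 := hxb
          by_cases hi1 : i = d1
          · have hz1 : zunit i d1 = 1 := by unfold zunit; rw [if_pos hi1.symm]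
            have hxbne : x d1 ≠ b := fun h => hne ⟨hxa', h⟩
            omega
          · have hz1 : zunit i d1 = 0 := by
              unfold zunit
              rw [if_neg (fun h => hi1 h.symm)]
            omega
        · rintro ⟨-, hxa, hxb⟩
          have hxa' : x d0 = a := hxa
          have hxb' : b + 1 ≤ x d1 := hxb
          refine ⟨rfl, ?_, ?_⟩
          · show x d0 + zunit i d0 = a
            rw [hz0]; omega
          · show b + 1 ≤ x d1 + zunit i d1
            have := hzunit_nonneg i d1
            omega
      simp only [hiff]; ring
    · have h1 : ¬ EH (x, i) := fun h => hi h.1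
      have h2 : ¬ EH (fun l => x l + zunit i l, i') := fun h => hi' h.1
      have h3 : ¬ EH (fun l => x l + zunit i' l, i) := fun h => hi h.1
      have h4 : ¬ EH (x, i') := fun h => hi' h.1
      rw [if_neg h1, if_neg h2, if_neg h3, if_neg h4]
      ring
  -- if no witness existed, k would divide j
  by_contra hno
  have hzero : ∀ p ∈ hfin.toFinset, cp p * F p = 0 := by
    intro p hp
    have hcoord : ¬ (p.1 d0 = a ∧ p.1 d1 = b) := fun hc => hno ⟨p, hp, hc⟩
    rw [hcpvanish p hcoord, zero_mul]
  rw [Finset.sum_eq_zero hzero] at hmain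
  exact hndvd ⟨S, by linarith⟩

/-- let `γ` be the `Rn × Tn`-style rectangular loop (side lengths `R`, `T`)
in the plane spanned by two coordinate directions of `ℤ^m`, let `k ≥ 1`, `j ≥ 1` with
`k ∤ j`, and let `n` be an `ℕ`-valued current on oriented cells (`Bool` records the
orientation) with finitely many nonzero plaquette values, satisfying the constraint of the
class `C_{jγ,k}`: for every positive edge `e`,
`Σ_p ∂p[e]·(n[p]−n[−p]) + k(n[e]−n[−e]) + jγ[e] = 0`.
Then the plaquette part of `supp n` contains at least `area(γ) = R·T` plaquettes. -/
theorem stmt19 (m : ℕ) (hm : 2 ≤ m) (d0 d1 : Fin m) (hd : d0 ≠ d1)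
    (R T : ℕ) (hR : 1 ≤ R) (hT : 1 ≤ T)
    (k j : ℤ) (hk : 1 ≤ k) (hj : 1 ≤ j) (hndvd : ¬ k ∣ j)
    (nE : ZEdge m × Bool → ℕ) (nP : ZPlaq m × Bool → ℕ)
    (hfin : {p : ZPlaq m | nP (p, true) ≠ 0 ∨ nP (p, false) ≠ 0}.Finite)
    (hcurrent : ∀ e : ZEdge m,
      (∑ᶠ p : ZPlaq m, bdCoef p e * ((nP (p, true) : ℤ) - (nP (p, false) : ℤ)))
        + k * ((nE (e, true) : ℤ) - (nE (e, false) : ℤ))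
        + j * rectLoop d0 d1 R T e = 0) :
    R * T ≤ hfin.toFinset.card := by
  classical
  have H : ∀ q : ℕ × ℕ, ∃ p : ZPlaq m, q.1 < R → q.2 < T →
      (p ∈ hfin.toFinset ∧ p.1 d0 = (q.1 : ℤ) ∧ p.1 d1 = (q.2 : ℤ)) := by
    intro q
    by_cases h : q.1 < R ∧ q.2 < T
    · obtain ⟨p, hp, hc⟩ := keylem m d0 d1 hd R T k j hndvd nE nP hfin hcurrent
        (q.1 : ℤ) (q.2 : ℤ) (Int.ofNat_nonneg q.1) (by exact_mod_cast h.1)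
        (Int.ofNat_nonneg q.2) (by exact_mod_cast h.2)
      exact ⟨p, fun _ _ => ⟨hp, hc⟩⟩
    · refine ⟨(fun _ => 0, d0, d0), fun h1 h2 => absurd ⟨h1, h2⟩ h⟩
  choose f hf using H
  have hRT : R * T = (Finset.range R ×ˢ Finset.range T).card := by
    rw [Finset.card_product, Finset.card_range, Finset.card_range]
  rw [hRT]
  apply Finset.card_le_card_of_injOn f
  · intro q hq
    obtain ⟨hq1, hq2⟩ := Finset.mem_product.1 hq
    exact (hf q (Finset.mem_range.1 hq1) (Finset.mem_range.1 hq2)).1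
  · intro q hq q' hq' hfe
    simp only [Finset.coe_product, Set.mem_prod, Finset.mem_coe, Finset.mem_range] at hq hq'
    obtain ⟨-, h1, h2⟩ := hf q hq.1 hq.2
    obtain ⟨-, h1', h2'⟩ := hf q' hq'.1 hq'.2
    have e1 : (q.1 : ℤ) = (q'.1 : ℤ) := by rw [← h1, ← h1', hfe]
    have e2 : (q.2 : ℤ) = (q'.2 : ℤ) := by rw [← h2, ← h2', hfe]
    have e1' : q.1 = q'.1 := by exact_mod_cast e1
    have e2' : q.2 = q'.2 := by exact_mod_cast e2
    exact Prod.ext e1' e2'
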